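/- Let n ≥ 2 be a natural number with (log₂ n)/n ≤ 1, let X_1, …, X_n be independent random variables each uniformly distributed on [0,1), and let I ⊆ [0,1) be a fixed subinterval of length (log₂ n)/n. Then the probability that at least 2·log₂ n of the points X_1, …, X_n lie in I is at most n^{−3/8}. -/

import Mathlib

open MeasureTheory ProbabilityTheory

/-- Probing estimate of Lemma 13: if `X_1, …, X_n` (`n ≥ 2`) are independent and uniform
on `[0,1)` and `I = [a,b) ⊆ [0,1)` has length `(log₂ n)/n ≤ 1`, then the probability that
at least `2·log₂ n` of the points lie in `I` is at most `n^(-3/8)`. -/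
theorem chernoff_log_interval {Ω : Type*} [MeasurableSpace Ω] (P : Measure Ω)
    [IsProbabilityMeasure P] (n : ℕ) (hn : 2 ≤ n)
    (hlen1 : Real.logb 2 n / n ≤ 1)
    (X : Fin n → Ω → ℝ) (hmeas : ∀ i, Measurable (X i))
    (hindep : iIndepFun X P)
    (hunif : ∀ i, Measure.map (X i) P = volume.restrict (Set.Ico (0 : ℝ) 1))
    (a b : ℝ) (ha : 0 ≤ a) (hb : b ≤ 1) (hlen : b - a = Real.logb 2 n / n) :
    P {ω | 2 * Real.logb 2 n ≤ (Nat.card {i : Fin n // X i ω ∈ Set.Ico a b} : ℝ)} ≤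
      ENNReal.ofReal ((n : ℝ) ^ (-(3 / 8 : ℝ))) := by
  have hn1 : (1 : ℝ) < n := by exact_mod_cast Nat.lt_of_lt_of_le one_lt_two hn
  have hnpos : (0 : ℝ) < n := by linarith
  set m : ℝ := Real.logb 2 n with hm
  have hm0 : 0 ≤ m := Real.logb_nonneg one_lt_two hn1.le
  set p : ℝ := b - a with hp
  have hp0 : 0 ≤ p := by rw [hlen]; positivity
  have hab : a ≤ b := by linarith
  -- the indicator random variables
  set Y : Fin n → Ω → ℝ := fun i ω => if X i ω ∈ Set.Ico a b then (1:ℝ) else 0 with hY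
  have hYmeas : ∀ i, Measurable (Y i) := by
    intro i
    have : Y i = (Set.Ico a b).indicator (fun _ => (1:ℝ)) ∘ X i := by
      funext ω; simp [hY, Set.indicator_apply]
    rw [this]
    exact (measurable_const.indicator measurableSet_Ico).comp (hmeas i)
  have hYindep : iIndepFun Y P := by
    have := hindep.comp (fun i => (Set.Ico a b).indicator (fun _ => (1:ℝ)))
      (fun i => measurable_const.indicator measurableSet_Ico)
    convert this using 2 with i
    funext ω; simp [hY, Set.indicator_apply]
  set S : Ω → ℝ := fun ω => ∑ i, Y i ω with hS
  -- rewrite the event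
  have hcard : ∀ ω, (Nat.card {i : Fin n // X i ω ∈ Set.Ico a b} : ℝ) = S ω := by
    intro ω
    rw [Nat.card_eq_fintype_card, Fintype.card_subtype, Finset.card_filter]
    push_cast
    rfl
  have hev : {ω | 2 * m ≤ (Nat.card {i : Fin n // X i ω ∈ Set.Ico a b} : ℝ)}
      = {ω | 2 * m ≤ S ω} := by
    ext ω; simp only [Set.mem_setOf_eq, hcard ω]
  rw [hev]
  -- basic facts about the indicators
  set t : ℝ := Real.log 2 with htdef
  have ht_gt : (0.6931471803 : ℝ) < t := Real.log_two_gt_d9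
  have ht0 : 0 ≤ t := by linarith
  have hexp_t : Real.exp t = 2 := Real.exp_log two_pos
  have hAmeas : ∀ i, MeasurableSet (X i ⁻¹' Set.Ico a b) :=
    fun i => (hmeas i) measurableSet_Ico
  have hPA : ∀ i, P (X i ⁻¹' Set.Ico a b) = ENNReal.ofReal p := by
    intro i
    rw [← Measure.map_apply (hmeas i) measurableSet_Ico, hunif i,
      Measure.restrict_apply measurableSet_Ico,
      Set.inter_eq_left.mpr (Set.Ico_subset_Ico ha hb), Real.volume_Ico]
  have hYind : ∀ i, Y i = (X i ⁻¹' Set.Ico a b).indicator (fun _ => (1:ℝ)) := by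
    intro i; funext ω
    by_cases h : X i ω ∈ Set.Ico a b
    · simp only [hY, Set.indicator_apply, Set.mem_preimage, if_pos h]
      exact (Set.indicator_of_mem (Set.mem_preimage.mpr h) (fun _ => (1:ℝ))).symm
    · simp only [hY, Set.indicator_apply, Set.mem_preimage, if_neg h]
      exact (Set.indicator_of_notMem (fun hc => h (Set.mem_preimage.mp hc)) (fun _ => (1:ℝ))).symm
  have hYint : ∀ i, Integrable (Y i) P := fun i => by
    rw [hYind i]; exact (integrable_const 1).indicator (hAmeas i)
  have hEY : ∀ i, ∫ ω, Y i ω ∂P = p := by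
    intro i
    rw [hYind i, integral_indicator_const _ (hAmeas i), measureReal_def, hPA i, smul_eq_mul, mul_one,
      ENNReal.toReal_ofReal hp0]
  have hexpY : ∀ i ω, Real.exp (t * Y i ω) = 1 + (Real.exp t - 1) * Y i ω := by
    intro i ω
    simp only [hY]
    by_cases h : X i ω ∈ Set.Ico a b
    · rw [if_pos h, mul_one, mul_one]; ring
    · rw [if_neg h, mul_zero, mul_zero, Real.exp_zero]; ring
  have hint_exp : ∀ i, Integrable (fun ω => Real.exp (t * Y i ω)) P := by
    intro i
    have : (fun ω => Real.exp (t * Y i ω)) = fun ω => 1 + (Real.exp t - 1) * Y i ω := by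
      funext ω; exact hexpY i ω
    rw [this]
    exact (integrable_const 1).add ((hYint i).const_mul _)
  have hmgf : ∀ i, mgf (Y i) P t = 1 + p := by
    intro i
    have h1 : mgf (Y i) P t = ∫ ω, Real.exp (t * Y i ω) ∂P := rfl
    rw [h1]
    have : (fun ω => Real.exp (t * Y i ω)) = fun ω => 1 + (Real.exp t - 1) * Y i ω := by
      funext ω; exact hexpY i ω
    rw [this, integral_add (integrable_const 1) ((hYint i).const_mul _), integral_const,
      integral_const_mul, hEY i, hexp_t]
    norm_num
  -- Chernoff bound
  have hSsum : S = ∑ i, Y i := by funext ω; simp [hS]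
  have hSint : Integrable (fun ω => Real.exp (t * S ω)) P := by
    rw [hSsum]
    exact hYindep.integrable_exp_mul_sum hYmeas (fun i _ => hint_exp i)
  have hmgfS : mgf S P t = (1 + p) ^ n := by
    rw [hSsum, hYindep.mgf_sum hYmeas Finset.univ]
    simp [hmgf]
  have hcher := measure_ge_le_exp_mul_mgf (X := S) (μ := P) (t := t) (2 * m) ht0 hSint
  rw [hmgfS] at hcher
  -- numeric estimates
  have hnp : (n : ℝ) * p = m := by
    rw [hlen]; field_simp
  have hlogn : Real.log n = m * t := by
    rw [hm, Real.logb, div_mul_cancel₀]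
    linarith
  have hbound : Real.exp (-t * (2 * m)) * (1 + p) ^ n ≤ (n : ℝ) ^ (-(3 / 8 : ℝ)) := by
    have h1 : (1 + p) ^ n ≤ Real.exp ((n : ℝ) * p) := by
      calc (1 + p) ^ n ≤ Real.exp p ^ n := by
            apply pow_le_pow_left₀ (by linarith)
            linarith [Real.add_one_le_exp p]
        _ = Real.exp ((n : ℝ) * p) := by
            rw [← Real.exp_nat_mul]
    calc Real.exp (-t * (2 * m)) * (1 + p) ^ n
        ≤ Real.exp (-t * (2 * m)) * Real.exp ((n : ℝ) * p) := by
          apply mul_le_mul_of_nonneg_left h1 (Real.exp_pos _).le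
      _ = Real.exp (-t * (2 * m) + m) := by rw [← Real.exp_add, hnp]
      _ ≤ (n : ℝ) ^ (-(3 / 8 : ℝ)) := by
          rw [Real.rpow_def_of_pos hnpos, Real.exp_le_exp, hlogn]
          nlinarith [mul_nonneg hm0 (by nlinarith : (0:ℝ) ≤ 13/8 * t - 1)]
  calc P {ω | 2 * m ≤ S ω}
      = ENNReal.ofReal (P {ω | 2 * m ≤ S ω}).toReal :=
        (ENNReal.ofReal_toReal (measure_ne_top P _)).symm
    _ ≤ ENNReal.ofReal ((n : ℝ) ^ (-(3 / 8 : ℝ))) := by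
        apply ENNReal.ofReal_le_ofReal
        calc (P {ω | 2 * m ≤ S ω}).toReal
            ≤ Real.exp (-t * (2 * m)) * (1 + p) ^ n := hcher
          _ ≤ _ := hbound
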